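/- If λ > 0 and n ≤ q, then the zero solution is unstable: there exist ε > 0 and t1 ≥ t0 such that for every δ ∈ (0,ε), every admissible solution with v(t1) = δ satisfies v(t) ≥ ε for some t ≥ t1. -/

import Mathlib

/-- An admissible solution of the reduced equation
`v'(t) = λ·t^{−n/q}·v(t) + ρ(t)` on `[t0,∞)` with values in `[0,d0]`,
where `|ρ(t)| ≤ M·t^{−n/q}·v(t)·(v(t) + t^{−1/q})`. -/
def IsAdmissibleLin (q n : ℕ) (lam d0 t0 M : ℝ) (v : ℝ → ℝ) : Prop :=
  (∀ t ≥ t0, v t ∈ Set.Icc (0:ℝ) d0) ∧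
  ∃ ρ : ℝ → ℝ,
    (∀ t ≥ t0, |ρ t| ≤ M * t ^ (-(n:ℝ)/(q:ℝ)) * v t * (v t + t ^ (-(1:ℝ)/(q:ℝ)))) ∧
    (∀ t ≥ t0, HasDerivAt v (lam * t ^ (-(n:ℝ)/(q:ℝ)) * v t + ρ t) t)

lemma monoOn_of_hasDerivAt {f f' : ℝ → ℝ} {a : ℝ}
    (h : ∀ t ∈ Set.Ici a, HasDerivAt f (f' t) t)
    (h' : ∀ t ∈ Set.Ici a, 0 ≤ f' t) : MonotoneOn f (Set.Ici a) := by
  apply monotoneOn_of_deriv_nonneg (convex_Ici a)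
  · exact fun x hx => (h x hx).continuousAt.continuousWithinAt
  · intro x hx
    rw [interior_Ici] at hx
    exact (h x (Set.mem_Ici.mpr (le_of_lt (Set.mem_Ioi.mp hx)))).differentiableAt.differentiableWithinAt
  · intro x hx
    rw [interior_Ici] at hx
    rw [(h x (Set.mem_Ici.mpr (Set.mem_Ioi.mp hx).le)).deriv]
    exact h' x (Set.mem_Ici.mpr (Set.mem_Ioi.mp hx).le)

/-- if `λ > 0` and `n ≤ q` the zero solution is unstable: there
exist `ε > 0` and `t1 ≥ t0` such that any admissible solution starting at any
`δ ∈ (0,ε)` at time `t1` eventually reaches the value `ε`. -/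
theorem instability_of_zero_linear_case
    (q n : ℕ) (hq : 0 < q) (hn : 0 < n) (hnq : n ≤ q)
    (lam d0 t0 M : ℝ) (hlam : 0 < lam) (hd0 : 0 < d0) (ht0 : 0 < t0) (hM : 0 < M) :
    ∃ ε > 0, ∃ t1 ≥ t0, ∀ δ ∈ Set.Ioo (0:ℝ) ε,
      ∀ v : ℝ → ℝ, IsAdmissibleLin q n lam d0 t0 M v → v t1 = δ →
        ∃ t ≥ t1, ε ≤ v t := by
  have hqR : (0:ℝ) < (q:ℝ) := by exact_mod_cast hq
  set a : ℝ := lam / (4 * M) with ha_def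
  have ha : 0 < a := div_pos hlam (by linarith)
  set ε : ℝ := min a d0 with hε_def
  have hε : 0 < ε := lt_min ha hd0
  set B : ℝ := a⁻¹ ^ (q:ℝ) with hB_def
  have hB : 0 < B := Real.rpow_pos_of_pos (inv_pos.mpr ha) _
  set t1 : ℝ := max (max t0 1) B with ht1_def
  have ht1_t0 : t0 ≤ t1 := le_trans (le_max_left _ _) (le_max_left _ _)
  have ht1_1 : (1:ℝ) ≤ t1 := le_trans (le_max_right _ _) (le_max_left _ _)
  have ht1_B : B ≤ t1 := le_max_right _ _
  have ht1pos : 0 < t1 := lt_of_lt_of_le one_pos ht1_1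
  refine ⟨ε, hε, t1, ht1_t0, ?_⟩
  rintro δ ⟨hδ0, hδε⟩ v ⟨hrange, ρ, hρ, hderiv⟩ hv1
  by_contra hcon
  push_neg at hcon
  -- hcon : ∀ t ≥ t1, v t < ε
  -- key facts for t ≥ t1
  have hq_ne : (q:ℝ) ≠ 0 := ne_of_gt hqR
  -- t^{-1/q} ≤ a for t ≥ t1
  have hsmall : ∀ t : ℝ, t1 ≤ t → t ^ (-(1:ℝ)/(q:ℝ)) ≤ a := by
    intro t ht
    have htpos : 0 < t := lt_of_lt_of_le ht1pos ht
    have h1 : a⁻¹ ≤ t ^ ((1:ℝ)/(q:ℝ)) := by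
      have : B ^ ((1:ℝ)/(q:ℝ)) ≤ t ^ ((1:ℝ)/(q:ℝ)) :=
        Real.rpow_le_rpow hB.le (le_trans ht1_B ht) (by positivity)
      calc a⁻¹ = (a⁻¹ ^ (q:ℝ)) ^ ((1:ℝ)/(q:ℝ)) := by
                rw [← Real.rpow_mul (le_of_lt (inv_pos.mpr ha)),
                  mul_one_div, div_self hq_ne, Real.rpow_one]
        _ ≤ t ^ ((1:ℝ)/(q:ℝ)) := this
    have h2 : t ^ (-(1:ℝ)/(q:ℝ)) = (t ^ ((1:ℝ)/(q:ℝ)))⁻¹ := by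
      rw [neg_div, Real.rpow_neg htpos.le]
    rw [h2]
    calc (t ^ ((1:ℝ)/(q:ℝ)))⁻¹ ≤ (a⁻¹)⁻¹ :=
          inv_anti₀ (inv_pos.mpr ha) h1
      _ = a := inv_inv a
  -- t^{-n/q} ≥ 1/t for t ≥ t1
  have hbig : ∀ t : ℝ, t1 ≤ t → t⁻¹ ≤ t ^ (-(n:ℝ)/(q:ℝ)) := by
    intro t ht
    have ht1' : (1:ℝ) ≤ t := le_trans ht1_1 ht
    have hexp : (-1:ℝ) ≤ -(n:ℝ)/(q:ℝ) := by
      rw [neg_div, neg_le_neg_iff, div_le_one hqR]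
      exact_mod_cast hnq
    have := Real.rpow_le_rpow_of_exponent_le ht1' hexp
    rwa [Real.rpow_neg_one] at this
  -- lower bound on derivative as long as v t < ε
  have hDlow : ∀ t : ℝ, t1 ≤ t →
      lam / 2 * (t ^ (-(n:ℝ)/(q:ℝ)) * v t) ≤ lam * t ^ (-(n:ℝ)/(q:ℝ)) * v t + ρ t := by
    intro t ht
    have ht0' : t0 ≤ t := le_trans ht1_t0 ht
    have htpos : 0 < t := lt_of_lt_of_le ht1pos ht
    have hvt0 : 0 ≤ v t := (hrange t ht0').1
    have hvlt : v t < ε := hcon t ht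
    have hpow : 0 < t ^ (-(n:ℝ)/(q:ℝ)) := Real.rpow_pos_of_pos htpos _
    have hbound : M * t ^ (-(n:ℝ)/(q:ℝ)) * v t * (v t + t ^ (-(1:ℝ)/(q:ℝ)))
        ≤ lam / 2 * (t ^ (-(n:ℝ)/(q:ℝ)) * v t) := by
      have h1 : v t + t ^ (-(1:ℝ)/(q:ℝ)) ≤ 2 * a := by
        have := hsmall t ht
        have : v t ≤ a := le_of_lt (lt_of_lt_of_le hvlt (min_le_left _ _))
        linarith [hsmall t ht]
      have h2 : M * t ^ (-(n:ℝ)/(q:ℝ)) * v t * (v t + t ^ (-(1:ℝ)/(q:ℝ)))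
          ≤ M * t ^ (-(n:ℝ)/(q:ℝ)) * v t * (2 * a) := by
        apply mul_le_mul_of_nonneg_left h1
        positivity
      have h3 : M * (2 * a) = lam / 2 := by
        field_simp [ha_def]
        rw [ha_def, mul_div_assoc', div_eq_iff (by positivity)]; ring
      calc M * t ^ (-(n:ℝ)/(q:ℝ)) * v t * (v t + t ^ (-(1:ℝ)/(q:ℝ)))
          ≤ M * t ^ (-(n:ℝ)/(q:ℝ)) * v t * (2 * a) := h2
        _ = M * (2 * a) * (t ^ (-(n:ℝ)/(q:ℝ)) * v t) := by ring
        _ = lam / 2 * (t ^ (-(n:ℝ)/(q:ℝ)) * v t) := by rw [h3]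
    have habs := hρ t ht0'
    have hρlow : -(lam / 2 * (t ^ (-(n:ℝ)/(q:ℝ)) * v t)) ≤ ρ t := by
      have := neg_abs_le (ρ t)
      nlinarith [abs_nonneg (ρ t)]
    nlinarith
  -- v is monotone on [t1, ∞)
  have hmono : MonotoneOn v (Set.Ici t1) := by
    apply monoOn_of_hasDerivAt
      (f' := fun t => lam * t ^ (-(n:ℝ)/(q:ℝ)) * v t + ρ t)
    · exact fun t ht => hderiv t (le_trans ht1_t0 ht)
    · intro t ht
      have htpos : 0 < t := lt_of_lt_of_le ht1pos ht
      have hvt0 : 0 ≤ v t := (hrange t (le_trans ht1_t0 ht)).1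
      have hpow : 0 < t ^ (-(n:ℝ)/(q:ℝ)) := Real.rpow_pos_of_pos htpos _
      have h1 := hDlow t ht
      have h0 : 0 ≤ lam / 2 * (t ^ (-(n:ℝ)/(q:ℝ)) * v t) := by positivity
      linarith
  have hvδ : ∀ t : ℝ, t1 ≤ t → δ ≤ v t := by
    intro t ht
    have := hmono (Set.self_mem_Ici) ht ht
    rwa [hv1] at this
  -- compare with logarithm
  set c : ℝ := lam * δ / 2 with hc_def
  have hc : 0 < c := by positivity
  set g : ℝ → ℝ := fun t => v t - c * Real.log t with hg_def
  have hgmono : MonotoneOn g (Set.Ici t1) := by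
    apply monoOn_of_hasDerivAt
      (f' := fun t => (lam * t ^ (-(n:ℝ)/(q:ℝ)) * v t + ρ t) - c * t⁻¹)
    · intro t ht
      have htpos : 0 < t := lt_of_lt_of_le ht1pos ht
      exact (hderiv t (le_trans ht1_t0 ht)).sub
        ((Real.hasDerivAt_log (ne_of_gt htpos)).const_mul c)
    · intro t ht
      have htpos : 0 < t := lt_of_lt_of_le ht1pos ht
      have hpow : 0 < t ^ (-(n:ℝ)/(q:ℝ)) := Real.rpow_pos_of_pos htpos _
      have h1 := hDlow t ht
      have h2 := hvδ t ht
      have h3 := hbig t ht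
      have h4 : c * t⁻¹ ≤ lam / 2 * (t ^ (-(n:ℝ)/(q:ℝ)) * v t) := by
        calc c * t⁻¹ ≤ c * t ^ (-(n:ℝ)/(q:ℝ)) :=
              mul_le_mul_of_nonneg_left h3 hc.le
          _ = lam / 2 * (t ^ (-(n:ℝ)/(q:ℝ)) * δ) := by rw [hc_def]; ring
          _ ≤ lam / 2 * (t ^ (-(n:ℝ)/(q:ℝ)) * v t) := by
              apply mul_le_mul_of_nonneg_left _ (by linarith)
              exact mul_le_mul_of_nonneg_left h2 hpow.le
      simp only [sub_nonneg]
      linarith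
  -- reach a contradiction at T
  set T : ℝ := t1 * Real.exp (ε / c) with hT_def
  have hexp1 : (1:ℝ) ≤ Real.exp (ε / c) := Real.one_le_exp (by positivity)
  have hT : t1 ≤ T := le_mul_of_one_le_right ht1pos.le hexp1
  have hlogT : Real.log T = Real.log t1 + ε / c := by
    rw [hT_def, Real.log_mul (ne_of_gt ht1pos) (ne_of_gt (Real.exp_pos _)),
      Real.log_exp]
  have hg := hgmono (Set.self_mem_Ici) hT hT
  have : δ + ε ≤ v T := by
    have : v t1 - c * Real.log t1 ≤ v T - c * Real.log T := hg
    rw [hv1, hlogT] at this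
    have hce : c * (ε / c) = ε := by field_simp
    nlinarith
  have := hcon T hT
  linarith
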